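/- Let K be a field, L/K a finite field extension, and C a K-linear abelian category. If (I, f) is an injective object of the base change category C_L, then I is an injective object of C. -/

import Mathlib

open CategoryTheory CategoryTheory.Limits

universe v u

variable (K : Type*) [Field K] (L : Type*) [Field L] [Algebra K L]
variable (C : Type u) [Category.{v} C] [Abelian C] [Linear K C]

structure BaseChange where
  obj : C
  str : L →ₐ[K] End obj

namespace BaseChange

variable {K L C}

@[ext]
structure Hom (X Y : BaseChange K L C) where
  hom : X.obj ⟶ Y.obj
  comm : ∀ l : L, X.str l ≫ hom = hom ≫ Y.str l

instance : Category (BaseChange K L C) where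
  Hom X Y := Hom X Y
  id X := ⟨𝟙 X.obj, fun l => by simp⟩
  comp {X Y Z} f g := ⟨f.hom ≫ g.hom, fun l => by
    rw [← Category.assoc, f.comm, Category.assoc, g.comm, Category.assoc]⟩

@[ext]
lemma hom_ext {X Y : BaseChange K L C} {f g : X ⟶ Y} (h : f.hom = g.hom) : f = g :=
  Hom.ext h

@[simp] lemma id_hom (X : BaseChange K L C) : Hom.hom (𝟙 X) = 𝟙 X.obj := rfl

@[simp] lemma comp_hom {X Y Z : BaseChange K L C} (f : X ⟶ Y) (g : Y ⟶ Z) :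
    (f ≫ g).hom = f.hom ≫ g.hom := rfl

section Preadditive

variable {X Y : BaseChange K L C}

instance : Zero (X ⟶ Y) := ⟨⟨0, fun l => by simp⟩⟩
instance : Add (X ⟶ Y) :=
  ⟨fun f g => ⟨f.hom + g.hom, fun l => by
    simp [Preadditive.comp_add, Preadditive.add_comp, f.comm, g.comm]⟩⟩
instance : Neg (X ⟶ Y) :=
  ⟨fun f => ⟨-f.hom, fun l => by simp [f.comm]⟩⟩
instance : Sub (X ⟶ Y) :=
  ⟨fun f g => ⟨f.hom - g.hom, fun l => by
    simp [Preadditive.comp_sub, Preadditive.sub_comp, f.comm, g.comm]⟩⟩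
instance : SMul ℕ (X ⟶ Y) :=
  ⟨fun n f => ⟨n • f.hom, fun l => by simp [f.comm]⟩⟩
instance : SMul ℤ (X ⟶ Y) :=
  ⟨fun n f => ⟨n • f.hom, fun l => by simp [f.comm]⟩⟩

@[simp] lemma zero_hom : (0 : X ⟶ Y).hom = 0 := rfl
@[simp] lemma add_hom (f g : X ⟶ Y) : (f + g).hom = f.hom + g.hom := rfl
@[simp] lemma neg_hom (f : X ⟶ Y) : (-f).hom = -f.hom := rfl
@[simp] lemma sub_hom (f g : X ⟶ Y) : (f - g).hom = f.hom - g.hom := rfl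

instance : AddCommGroup (X ⟶ Y) :=
  Function.Injective.addCommGroup (Hom.hom : (X ⟶ Y) → (X.obj ⟶ Y.obj))
    (fun _ _ h => Hom.ext h) rfl (fun _ _ => rfl) (fun _ => rfl) (fun _ _ => rfl)
    (fun _ _ => rfl) (fun _ _ => rfl)

instance : Preadditive (BaseChange K L C) where
  add_comp _ _ _ f f' g := by apply hom_ext; simp [Preadditive.add_comp]
  comp_add _ _ _ f g g' := by apply hom_ext; simp [Preadditive.comp_add]

end Preadditive

end BaseChange

open BaseChange


attribute [local instance] CategoryTheory.Abelian.hasFiniteBiproducts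

noncomputable section AuxBC

variable {K : Type*} [Field K] {L : Type*} [Field L] [Algebra K L] [FiniteDimensional K L]
variable {C : Type u} [Category.{v} C] [Abelian C] [Linear K C]

lemma endAdd {Y : C} (f g : Y ⟶ Y) :
    @HAdd.hAdd (End Y) (End Y) (End Y) instHAdd f g
      = @HAdd.hAdd (Y ⟶ Y) (Y ⟶ Y) (Y ⟶ Y) instHAdd f g := rfl

lemma endSMul {Y : C} (r : K) (f : Y ⟶ Y) :
    @HSMul.hSMul K (End Y) (End Y) instHSMul r f
      = @HSMul.hSMul K (Y ⟶ Y) (Y ⟶ Y) instHSMul r f := rfl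

lemma endSum {Y : C} {ι : Type*} (s : Finset ι) (f : ι → End Y) :
    (∑ i ∈ s, f i : End Y) = (∑ i ∈ s, (f i : Y ⟶ Y) : Y ⟶ Y) := rfl

lemma algebraMapEnd {Y : C} (r : K) :
    algebraMap K (End Y) r = r • 𝟙 Y := by
  rw [Algebra.algebraMap_eq_smul_one, endSMul, End.one_def]

variable (K L)

set_option maxHeartbeats 1600000 in
/-- The `L`-action on `⨁ fun _ : Fin n => A` via the left regular representation. -/
def lAction (A : C) :
    L →ₐ[K] End (⨁ fun _ : Fin (Module.finrank K L) => A) where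
  toFun l := biproduct.matrix fun j i =>
    (Algebra.leftMulMatrix (Module.finBasis K L) l) i j • 𝟙 A
  map_one' := by
    apply biproduct.hom_ext'
    intro j
    apply biproduct.hom_ext
    intro i
    rw [End.one_def]
    simp only [biproduct.ι_matrix, biproduct.lift_π, Category.comp_id,
      map_one, Matrix.one_apply, biproduct.ι_π]
    split_ifs with h h' h'
    · simp
    · exact absurd h.symm h'
    · exact absurd h'.symm h
    · simp
  map_mul' x y := by
    apply biproduct.hom_ext'
    intro j
    apply biproduct.hom_ext
    intro i
    rw [End.mul_def]
    simp only [biproduct.ι_matrix, biproduct.matrix_π, biproduct.lift_π, Category.assoc]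
    rw [← Category.assoc, biproduct.ι_matrix, biproduct.lift_desc, map_mul, Matrix.mul_apply,
      Finset.sum_smul]
    exact Finset.sum_congr rfl fun k _ => by
      rw [Linear.smul_comp, Linear.comp_smul, Category.comp_id, smul_smul, mul_comm]
  map_zero' := by
    apply biproduct.hom_ext'
    intro j
    apply biproduct.hom_ext
    intro i
    simp
  map_add' x y := by
    apply biproduct.hom_ext'
    intro j
    apply biproduct.hom_ext
    intro i
    rw [endAdd]
    simp only [Preadditive.add_comp, Preadditive.comp_add, biproduct.ι_matrix,
      biproduct.lift_π, map_add, Matrix.add_apply, add_smul]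
  commutes' r := by
    apply biproduct.hom_ext'
    intro j
    apply biproduct.hom_ext
    intro i
    rw [algebraMapEnd]
    simp only [biproduct.ι_matrix, biproduct.lift_π, Linear.comp_smul, Linear.smul_comp,
      Category.comp_id]
    have h2 : (algebraMap K (Matrix (Fin (Module.finrank K L)) (Fin (Module.finrank K L)) K)) r i j
        = if i = j then r else 0 := by
      rw [Algebra.algebraMap_eq_smul_one]
      simp [Matrix.one_apply, Matrix.smul_apply, smul_ite]
    rw [AlgHom.commutes, h2, biproduct.ι_π]
    split_ifs with h h' h'
    · simp
    · exact absurd h.symm h'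
    · exact absurd h'.symm h
    · simp

lemma lAction_apply (A : C) (l : L) :
    lAction K L A l = biproduct.matrix fun j i =>
      (Algebra.leftMulMatrix (Module.finBasis K L) l) i j • 𝟙 A := rfl

end AuxBC

/-- **Statement 11.** For a finite field extension `L/K` and a `K`-linear abelian category
`C`: if `(I, f)` is an injective object of `C_L`, then `I` is injective in `C`. -/
theorem injective_of_baseChange_injective
    (K : Type*) [Field K] (L : Type*) [Field L] [Algebra K L] [FiniteDimensional K L]
    (C : Type u) [Category.{v} C] [Abelian C] [Linear K C]
    (X : BaseChange K L C) (hX : Injective X) : Injective X.obj := by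
  constructor
  intro A B g u hu
  set b := Module.finBasis K L with hb
  let TA : BaseChange K L C := ⟨⨁ fun _ : Fin (Module.finrank K L) => A, lAction K L A⟩
  let TB : BaseChange K L C := ⟨⨁ fun _ : Fin (Module.finrank K L) => B, lAction K L B⟩
  let Tu : TA ⟶ TB := ⟨biproduct.map fun _ => u, by
    intro l
    apply biproduct.hom_ext'
    intro k
    apply biproduct.hom_ext
    intro i
    show (biproduct.ι _ k ≫ lAction K L A l ≫ biproduct.map fun _ => u) ≫ biproduct.π _ i
      = (biproduct.ι _ k ≫ (biproduct.map fun _ => u) ≫ lAction K L B l) ≫ biproduct.π _ i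
    simp [lAction_apply, Linear.smul_comp, Linear.comp_smul]⟩
  haveI : Mono Tu := Preadditive.mono_of_cancel_zero _ (fun {Z} α hα => by
    apply BaseChange.hom_ext
    apply biproduct.hom_ext
    intro i
    have h1 : α.hom ≫ (biproduct.map fun _ => u) = 0 := congrArg Hom.hom hα
    have h2 : (α.hom ≫ biproduct.π _ i) ≫ u = 0 := by
      rw [Category.assoc, ← biproduct.map_π (fun _ => u) i, ← Category.assoc, h1, zero_comp]
    rw [zero_of_comp_mono u h2, zero_hom, zero_comp])
  let ghat : TA ⟶ X := ⟨biproduct.desc fun j => g ≫ X.str (b j), by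
    intro l
    apply biproduct.hom_ext'
    intro k
    show biproduct.ι _ k ≫ lAction K L A l ≫ biproduct.desc (fun j => g ≫ X.str (b j))
      = biproduct.ι _ k ≫ biproduct.desc (fun j => g ≫ X.str (b j)) ≫ X.str l
    rw [lAction_apply, ← Category.assoc, biproduct.ι_matrix, biproduct.lift_desc,
      ← Category.assoc, biproduct.ι_desc, Category.assoc]
    have hmul : X.str (b k) ≫ X.str l = X.str (l * b k) := by
      rw [map_mul, End.mul_def]
    rw [hmul]
    have hrepr : l * b k = ∑ i, (Algebra.leftMulMatrix b l) i k • b i := by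
      conv_lhs => rw [← Module.Basis.sum_repr b (l * b k)]
      exact Finset.sum_congr rfl fun i _ => by
        rw [Algebra.leftMulMatrix_eq_repr_mul]
    rw [hrepr, map_sum, endSum]
    rw [Preadditive.comp_sum]
    exact Finset.sum_congr rfl fun i _ => by
      rw [map_smul, endSMul, Linear.comp_smul, Linear.smul_comp, Category.id_comp]⟩
  obtain ⟨h, hh⟩ := hX.factors ghat Tu
  refine ⟨∑ j, (b.repr 1) j • (biproduct.ι (fun _ : Fin (Module.finrank K L) => B) j ≫ h.hom),
    ?_⟩
  have key : ∀ j, u ≫ biproduct.ι (fun _ : Fin (Module.finrank K L) => B) j ≫ h.hom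
      = g ≫ X.str (b j) := by
    intro j
    have : biproduct.ι (fun _ : Fin (Module.finrank K L) => A) j ≫ (Tu ≫ h).hom
        = biproduct.ι _ j ≫ ghat.hom := by rw [hh]
    simpa only [Tu, ghat, comp_hom, biproduct.ι_map_assoc, biproduct.ι_desc,
      Category.assoc] using this
  rw [Preadditive.comp_sum]
  have : ∀ j ∈ Finset.univ, u ≫ ((b.repr 1) j • (biproduct.ι
      (fun _ : Fin (Module.finrank K L) => B) j ≫ h.hom)) = (b.repr 1) j • (g ≫ X.str (b j)) := by
    intro j _
    rw [Linear.comp_smul, key j]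
  rw [Finset.sum_congr rfl this]
  have hone : (∑ j, (b.repr 1) j • (g ≫ X.str (b j)) : A ⟶ X.obj) = g ≫ X.str 1 := by
    have h1 : (1 : L) = ∑ j, (b.repr 1) j • b j := (Module.Basis.sum_repr b 1).symm
    conv_rhs => rw [h1]
    rw [map_sum, endSum, Preadditive.comp_sum]
    exact Finset.sum_congr rfl fun j _ => by
      rw [map_smul, endSMul, Linear.comp_smul]
  rw [hone, map_one, End.one_def, Category.comp_id]
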